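/- arXiv:2312.05243 — 2 statements merged into one kernel-verified Lean document; each statement's English description precedes it below -/
import Mathlib

section
/- Consider a finite-state Markov chain with disjoint sets U (forbidden) and E (target), and suppose the hitting time τ = τ_{U∪E} of U ∪ E is almost surely finite from state x ∉ U ∪ E. Then the safety probability S(x) = P_x[τ_U < τ_E] equals the expected sum E_x[∑_{t=0}^{τ-1} κ(X_t)], where κ(y) = ∑_{z ∈ U} p(y,z) is the one-step probability of jumping into U from y. -/
open MeasureTheory Set Filter
open scoped ENNReal

noncomputable section

/-- First hitting time of a set `A` along the path `ω`, valued in `ℕ∞`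
(`⊤` if the path never visits `A`). -/
def hit {X : Type*} (A : Set X) (ω : ℕ → X) : ℕ∞ :=
  sInf ((fun n : ℕ => (n : ℕ∞)) '' {n | ω n ∈ A})

/-- `P` is the family of path measures of a time-homogeneous Markov chain with
one-step transition kernel `p`, where `P x` is the law of the chain started at `x`. -/
def IsMarkovChain {X : Type*} [MeasurableSpace X] [DecidableEq X]
    (P : X → Measure (ℕ → X)) (p : X → X → ℝ≥0∞) : Prop :=
  (∀ x, IsProbabilityMeasure (P x)) ∧
  (∀ x y, P x {ω | ω 0 = y} = if y = x then 1 else 0) ∧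
  (∀ x (n : ℕ) (s : ℕ → X),
    P x {ω | ∀ i ≤ n + 1, ω i = s i}
      = P x {ω | ∀ i ≤ n, ω i = s i} * p (s n) (s (n + 1)))

/- ### Auxiliary lemmas about `hit` -/

lemma hit_gt_iff {X : Type*} (A : Set X) (ω : ℕ → X) (t : ℕ) :
    (t : ℕ∞) < hit A ω ↔ ∀ i ≤ t, ω i ∉ A := by
  constructor
  · intro h i hi hmem
    have h1 : hit A ω ≤ (i : ℕ∞) := sInf_le ⟨i, hmem, rfl⟩
    exact absurd h (not_lt.mpr (h1.trans (by exact_mod_cast hi)))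
  · intro h
    have h1 : ((t + 1 : ℕ) : ℕ∞) ≤ hit A ω := by
      apply le_sInf
      rintro b ⟨n, hn, rfl⟩
      have : t + 1 ≤ n := Nat.succ_le_of_lt (lt_of_not_ge fun hle => h n hle hn)
      show ((t + 1 : ℕ) : ℕ∞) ≤ ((n : ℕ) : ℕ∞)
      exact_mod_cast this
    calc (t : ℕ∞) < ((t + 1 : ℕ) : ℕ∞) := by exact_mod_cast Nat.lt_succ_self t
      _ ≤ hit A ω := h1

lemma hit_le_of_mem {X : Type*} {A : Set X} {ω : ℕ → X} {n : ℕ} (h : ω n ∈ A) :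
    hit A ω ≤ (n : ℕ∞) :=
  sInf_le ⟨n, h, rfl⟩

lemma hit_spec {X : Type*} {A : Set X} {ω : ℕ → X} (h : hit A ω ≠ ⊤) :
    ∃ n : ℕ, hit A ω = (n : ℕ∞) ∧ ω n ∈ A ∧ ∀ i < n, ω i ∉ A := by
  have hne : {n | ω n ∈ A}.Nonempty := by
    by_contra hne
    rw [Set.not_nonempty_iff_eq_empty] at hne
    exact h (by rw [hit, hne, Set.image_empty, sInf_empty])
  refine ⟨sInf {n | ω n ∈ A}, ?_, Nat.sInf_mem hne, fun i hi => Nat.notMem_of_lt_sInf hi⟩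
  apply le_antisymm
  · exact hit_le_of_mem (Nat.sInf_mem hne)
  · apply le_sInf
    rintro b ⟨n, hn, rfl⟩
    show ((sInf {n | ω n ∈ A} : ℕ) : ℕ∞) ≤ ((n : ℕ) : ℕ∞)
    exact_mod_cast Nat.sInf_le hn

/-- if the hitting time `τ = τ_{U ∪ E}` is a.s. finite from `x ∉ U ∪ E`,
then the safety probability `S(x) = P_x[τ_U < τ_E]` equals
`E_x[∑_{t=0}^{τ-1} κ(X_t)]` where `κ(y) = ∑_{z ∈ U} p(y,z)`. -/
theorem stmt1 {X : Type*} [Fintype X] [DecidableEq X] [MeasurableSpace X]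
    (P : X → Measure (ℕ → X)) (p : X → X → ℝ≥0∞)
    (U E : Set X) (hUE : Disjoint U E)
    (hmc : IsMarkovChain P p)
    (x : X) (hx : x ∉ U ∪ E)
    (hfin : P x {ω | hit (U ∪ E) ω < ⊤} = 1) :
    P x {ω | hit U ω < hit E ω}
      = ∫⁻ ω, ∑' t : ℕ,
          (if (t : ℕ∞) < hit (U ∪ E) ω then ∑' z : U, p (ω t) (z : X) else 0) ∂ P x := by
  classical
  obtain ⟨hprob, hinit, hstep⟩ := hmc
  -- ### Step 0: the σ-algebra on `X` is discrete.
  have hsep : ∀ y z : X, z ≠ y → ∃ S : Set X, MeasurableSet S ∧ z ∈ S ∧ y ∉ S := by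
    intro y z hzy
    have h0 : P y {ω | ω 0 = z} = 0 := by
      rw [hinit y z, if_neg hzy]
    obtain ⟨T, hsub, hTm, hT0⟩ := MeasureTheory.exists_measurable_superset_of_null h0
    have h1 : P y {ω | ω 0 = y} = 1 := by rw [hinit y y, if_pos rfl]
    have hy : ∃ ω : ℕ → X, ω 0 = y ∧ ω ∉ T := by
      by_contra hcon
      push_neg at hcon
      have hsub' : {ω : ℕ → X | ω 0 = y} ⊆ T := fun ω hω => hcon ω hω
      have : (1 : ℝ≥0∞) ≤ 0 := by
        calc (1 : ℝ≥0∞) = P y {ω | ω 0 = y} := h1.symm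
          _ ≤ P y T := measure_mono hsub'
          _ = 0 := hT0
      exact absurd this (by norm_num)
    obtain ⟨ω, hω0, hωT⟩ := hy
    refine ⟨(fun a => Function.update ω 0 a) ⁻¹' T, hTm.preimage (measurable_update ω), ?_, ?_⟩
    · exact hsub (by simp [Function.update_self])
    · intro hmem
      apply hωT
      have heq : Function.update ω 0 y = ω := by
        rw [← hω0]; exact Function.update_eq_self 0 ω
      have hmem' : Function.update ω 0 y ∈ T := hmem
      rwa [heq] at hmem'
  have hmX : ∀ s : Set X, MeasurableSet s := by
    have hsing : ∀ z : X, MeasurableSet ({z} : Set X) := by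
      intro z
      have hch : ∀ y : X, ∃ S : Set X, z ≠ y → MeasurableSet S ∧ z ∈ S ∧ y ∉ S := by
        intro y
        by_cases hzy : z ≠ y
        · obtain ⟨S, h1, h2, h3⟩ := hsep y z hzy
          exact ⟨S, fun _ => ⟨h1, h2, h3⟩⟩
        · exact ⟨∅, fun h => absurd h hzy⟩
      choose S hS using hch
      have : ({z} : Set X) = ⋂ y : X, ⋂ (_ : z ≠ y), S y := by
        ext w
        simp only [Set.mem_singleton_iff, Set.mem_iInter]
        constructor
        · rintro rfl y hzy
          exact (hS y hzy).2.1
        · intro hw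
          by_contra hwz
          have hzw : z ≠ w := fun h => hwz h.symm
          exact (hS w hzw).2.2 (hw w hzw)
      rw [this]
      exact MeasurableSet.iInter fun y => MeasurableSet.iInter fun hy => (hS y hy).1
    intro s
    have : s = ⋃ z ∈ s, ({z} : Set X) := by simp
    rw [this]
    exact MeasurableSet.biUnion s.to_countable fun z _ => hsing z
  have hmfun : ∀ {β : Type} [MeasurableSpace β] (g : X → β), Measurable g :=
    fun g s _ => hmX _
  have hmeval : ∀ i : ℕ, Measurable (fun ω : ℕ → X => ω i) := fun i => measurable_pi_apply i
  -- ### Notation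
  set κ : X → ℝ≥0∞ := fun y => ∑' z : U, p y (z : X) with hκdef
  set G : ℕ → Set (ℕ → X) := fun t => {ω | ∀ i ≤ t, ω i ∉ U ∪ E} with hGdef
  set D : ℕ → Set (ℕ → X) := fun t => G t ∩ {ω | ω (t + 1) ∈ U} with hDdef
  have hmG : ∀ t, MeasurableSet (G t) := by
    intro t
    have : G t = ⋂ i, ⋂ (_ : i ≤ t), (fun ω : ℕ → X => ω i) ⁻¹' ((U ∪ E)ᶜ) := by
      ext ω; simp [hGdef]
    rw [this]
    exact MeasurableSet.iInter fun i => MeasurableSet.iInter fun _ => (hmeval i) (hmX _)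
  have hmD : ∀ t, MeasurableSet (D t) :=
    fun t => (hmG t).inter ((hmeval (t + 1)) (hmX U))
  -- ### The key cylinder computation
  have key : ∀ t : ℕ, ∫⁻ ω, (G t).indicator (fun ω' => κ (ω' t)) ω ∂ P x = P x (D t) := by
    intro t
    set Cv : (Fin (t + 1) → X) → Set (ℕ → X) :=
      fun v => {ω | ∀ i : Fin (t + 1), ω (i : ℕ) = v i} with hCvdef
    have hmCv : ∀ v, MeasurableSet (Cv v) := by
      intro v
      have : Cv v = ⋂ i : Fin (t + 1), (fun ω : ℕ → X => ω (i : ℕ)) ⁻¹' {v i} := by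
        ext ω; simp [hCvdef]
      rw [this]
      exact MeasurableSet.iInter fun i => (hmeval _) (hmX _)
    set c : (Fin (t + 1) → X) → ℝ≥0∞ :=
      fun v => if ∀ i : Fin (t + 1), v i ∉ U ∪ E then κ (v ⟨t, Nat.lt_succ_self t⟩) else 0
      with hcdef
    -- pointwise decomposition of the integrand
    have hpt : ∀ ω : ℕ → X, (G t).indicator (fun ω' => κ (ω' t)) ω
        = ∑' v : Fin (t + 1) → X, (Cv v).indicator (fun _ => c v) ω := by
      intro ω
      set v₀ : Fin (t + 1) → X := fun i => ω (i : ℕ) with hv₀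
      have hzero : ∀ v, v ≠ v₀ → (Cv v).indicator (fun _ => c v) ω = 0 := by
        intro v hv
        apply Set.indicator_of_notMem
        intro hmem
        exact hv (funext fun i => (hmem i).symm)
      have hsingle : ∑' v : Fin (t + 1) → X, (Cv v).indicator (fun _ => c v) ω = c v₀ := by
        rw [tsum_eq_single v₀ hzero]
        exact Set.indicator_of_mem (show ω ∈ Cv v₀ from fun i => rfl) _
      rw [hsingle]
      by_cases hωG : ω ∈ G t
      · rw [Set.indicator_of_mem hωG]
        simp only [hcdef]
        rw [if_pos (show ∀ i : Fin (t + 1), v₀ i ∉ U ∪ E from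
          fun i => hωG (i : ℕ) (Nat.lt_succ_iff.mp i.isLt))]
      · rw [Set.indicator_of_notMem hωG]
        simp only [hcdef]
        rw [if_neg]
        intro hall
        apply hωG
        intro i hi
        exact hall ⟨i, Nat.lt_succ_of_le hi⟩
      -- done hpt
    calc ∫⁻ ω, (G t).indicator (fun ω' => κ (ω' t)) ω ∂ P x
        = ∫⁻ ω, ∑' v : Fin (t + 1) → X, (Cv v).indicator (fun _ => c v) ω ∂ P x :=
          lintegral_congr hpt
      _ = ∑' v : Fin (t + 1) → X, ∫⁻ ω, (Cv v).indicator (fun _ => c v) ω ∂ P x :=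
          lintegral_tsum fun v => ((measurable_const.indicator (hmCv v)).aemeasurable)
      _ = ∑' v : Fin (t + 1) → X, c v * P x (Cv v) := by
          congr 1; ext v; exact lintegral_indicator_const (hmCv v) (c v)
      _ = ∑' v : Fin (t + 1) → X, P x (D t ∩ Cv v) := by
          congr 1; ext v
          by_cases hv : ∀ i : Fin (t + 1), v i ∉ U ∪ E
          · -- good prefix
            have hDCv : D t ∩ Cv v = ⋃ z : U, (Cv v ∩ {ω | ω (t + 1) = (z : X)}) := by
              ext ω
              simp only [Set.mem_inter_iff, Set.mem_iUnion, hDdef, Set.mem_setOf_eq]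
              constructor
              · rintro ⟨⟨hG', hU'⟩, hC⟩
                exact ⟨⟨ω (t + 1), hU'⟩, hC, rfl⟩
              · rintro ⟨⟨z, hz⟩, hC, hz'⟩
                refine ⟨⟨?_, ?_⟩, hC⟩
                · intro i hi
                  have := hC ⟨i, Nat.lt_succ_of_le hi⟩
                  rw [this]
                  exact hv ⟨i, Nat.lt_succ_of_le hi⟩
                · rw [hz']; exact hz
            have hzstep : ∀ z : X, P x (Cv v ∩ {ω | ω (t + 1) = z})
                = P x (Cv v) * p (v ⟨t, Nat.lt_succ_self t⟩) z := by
              intro z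
              set s : ℕ → X := fun i => if h : i < t + 1 then v ⟨i, h⟩ else z with hsdef
              have e1 : {ω : ℕ → X | ∀ i ≤ t + 1, ω i = s i} = Cv v ∩ {ω | ω (t + 1) = z} := by
                ext ω
                simp only [Set.mem_setOf_eq, Set.mem_inter_iff, hCvdef]
                constructor
                · intro h
                  constructor
                  · intro i
                    have := h (i : ℕ) (Nat.le_of_lt_succ (Nat.lt_succ_of_lt i.isLt))
                    simp only [hsdef] at this
                    rwa [dif_pos i.isLt] at this
                  · have := h (t + 1) le_rfl
                    simp only [hsdef] at this
                    rwa [dif_neg (lt_irrefl (t + 1))] at this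
                · rintro ⟨hC, hz⟩ i hi
                  rcases Nat.lt_succ_iff_lt_or_eq.mp (Nat.lt_succ_of_le hi) with hi' | hi'
                  · simp only [hsdef]
                    rw [dif_pos hi']
                    exact hC ⟨i, hi'⟩
                  · simp only [hsdef]
                    rw [hi', dif_neg (lt_irrefl (t + 1))]
                    exact hi' ▸ hz
              have e2 : {ω : ℕ → X | ∀ i ≤ t, ω i = s i} = Cv v := by
                ext ω
                simp only [Set.mem_setOf_eq, hCvdef]
                constructor
                · intro h i
                  have := h (i : ℕ) (Nat.lt_succ_iff.mp i.isLt)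
                  simp only [hsdef] at this
                  rwa [dif_pos i.isLt] at this
                · intro h i hi
                  simp only [hsdef]
                  rw [dif_pos (Nat.lt_succ_of_le hi)]
                  exact h ⟨i, Nat.lt_succ_of_le hi⟩
              have e3 : s t = v ⟨t, Nat.lt_succ_self t⟩ := by
                simp only [hsdef]; rw [dif_pos (Nat.lt_succ_self t)]
              have e4 : s (t + 1) = z := by
                simp only [hsdef]; rw [dif_neg (lt_irrefl (t + 1))]
              have := hstep x t s
              rw [e1, e2, e3, e4] at this
              exact this
            rw [hDCv, measure_iUnion ?_ ?_]
            · have : ∀ z : U, P x (Cv v ∩ {ω | ω (t + 1) = (z : X)})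
                  = P x (Cv v) * p (v ⟨t, Nat.lt_succ_self t⟩) (z : X) := fun z => hzstep z
              rw [tsum_congr this, ENNReal.tsum_mul_left]
              simp only [hcdef]
              rw [if_pos hv]
              ring
            · intro z z' hzz'
              apply Set.disjoint_left.mpr
              rintro ω ⟨_, h1⟩ ⟨_, h2⟩
              exact hzz' (Subtype.ext (h1 ▸ h2 ▸ rfl))
            · intro z
              exact (hmCv v).inter ((hmeval (t + 1)) (hmX ({(z : X)} : Set X)))
          · -- bad prefix : both sides vanish
            have : D t ∩ Cv v = ∅ := by
              ext ω
              simp only [Set.mem_inter_iff, Set.mem_empty_iff_false, iff_false, hDdef,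
                Set.mem_setOf_eq, not_and]
              rintro ⟨hG', _⟩ hC
              apply hv
              intro i
              rw [← hC i]
              exact hG' (i : ℕ) (Nat.lt_succ_iff.mp i.isLt)
            rw [this]
            simp only [hcdef]
            rw [if_neg hv, zero_mul, measure_empty]
      _ = P x (⋃ v : Fin (t + 1) → X, D t ∩ Cv v) := by
          rw [measure_iUnion ?_ ?_]
          · intro v v' hvv'
            apply Set.disjoint_left.mpr
            rintro ω ⟨_, h1⟩ ⟨_, h2⟩
            exact hvv' (funext fun i => (h1 i).symm.trans (h2 i))
          · intro v
            exact (hmD t).inter (hmCv v)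
      _ = P x (D t) := by
          congr 1
          ext ω
          simp only [Set.mem_iUnion, Set.mem_inter_iff]
          constructor
          · rintro ⟨v, hD', _⟩; exact hD'
          · intro hD'
            exact ⟨fun i => ω (i : ℕ), hD', fun i => rfl⟩
  -- ### disjointness and a.s. decomposition of the event {hit U < hit E}
  have hdisj : Pairwise (Function.onFun Disjoint D) := by
    have haux : ∀ t t' : ℕ, t < t' → Disjoint (D t) (D t') := by
      intro t t' htt'
      apply Set.disjoint_left.mpr
      rintro ω ⟨_, hU'⟩ ⟨hG', _⟩
      exact hG' (t + 1) (Nat.succ_le_of_lt htt') (Set.mem_union_left _ hU')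
    intro t t' htt'
    rcases lt_or_gt_of_ne htt' with h | h
    · exact haux t t' h
    · exact (haux t' t h).symm
  have hDA : ∀ t, D t ⊆ {ω | hit U ω < hit E ω} := by
    intro t ω hω
    obtain ⟨hG', hU'⟩ := hω
    have h1 : hit U ω ≤ ((t + 1 : ℕ) : ℕ∞) := hit_le_of_mem hU'
    have h2 : ((t + 1 : ℕ) : ℕ∞) < hit E ω := by
      rw [hit_gt_iff]
      intro i hi
      rcases Nat.lt_succ_iff_lt_or_eq.mp (Nat.lt_succ_of_le hi) with hi' | hi'
      · intro hmem
        exact hG' i (Nat.lt_succ_iff.mp hi') (Set.mem_union_right _ hmem)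
      · rw [hi']
        exact fun hmem => Set.disjoint_left.mp hUE hU' hmem
    exact lt_of_le_of_lt h1 h2
  have hcover : {ω : ℕ → X | hit U ω < hit E ω} ⊆ {ω | ω 0 ∈ U} ∪ ⋃ t, D t := by
    intro ω hω
    have hne : hit U ω ≠ ⊤ := hω.ne_top
    obtain ⟨n, hn, hmemU, hbefore⟩ := hit_spec hne
    rcases n with _ | m
    · exact Or.inl hmemU
    · refine Or.inr (Set.mem_iUnion.mpr ⟨m, ?_, hmemU⟩)
      intro i hi
      have hiU : ω i ∉ U := hbefore i (Nat.lt_succ_of_le hi)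
      have hiE : ω i ∉ E := by
        have hmlt : ((m : ℕ) : ℕ∞) < hit E ω := by
          have : ((m : ℕ) : ℕ∞) < hit U ω := by
            rw [hn]; exact_mod_cast Nat.lt_succ_self m
          exact lt_trans this hω
        exact (hit_gt_iff E ω m).mp hmlt i hi
      intro hmem
      rcases hmem with h | h
      · exact hiU h
      · exact hiE h
  have hnull : P x {ω : ℕ → X | ω 0 ∈ U} = 0 := by
    have hsub : {ω : ℕ → X | ω 0 ∈ U} = ⋃ z : U, {ω : ℕ → X | ω 0 = (z : X)} := by
      ext ω
      simp only [Set.mem_setOf_eq, Set.mem_iUnion]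
      exact ⟨fun h => ⟨⟨ω 0, h⟩, rfl⟩, fun ⟨z, hz⟩ => hz ▸ z.2⟩
    rw [hsub]
    apply le_antisymm _ zero_le
    calc P x (⋃ z : U, {ω : ℕ → X | ω 0 = (z : X)})
        ≤ ∑' z : U, P x {ω : ℕ → X | ω 0 = (z : X)} := measure_iUnion_le _
      _ = 0 := by
          apply ENNReal.summable.tsum_eq_zero_iff.mpr
          intro z
          rw [hinit x (z : X), if_neg]
          intro hzx
          exact hx (Set.mem_union_left _ (hzx ▸ z.2))
  -- ### LHS = ∑ P x (D t)
  have hLHS : P x {ω | hit U ω < hit E ω} = ∑' t : ℕ, P x (D t) := by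
    have hUnion : P x (⋃ t, D t) = ∑' t : ℕ, P x (D t) := measure_iUnion hdisj hmD
    apply le_antisymm
    · calc P x {ω | hit U ω < hit E ω}
          ≤ P x ({ω | ω 0 ∈ U} ∪ ⋃ t, D t) := measure_mono hcover
        _ ≤ P x {ω : ℕ → X | ω 0 ∈ U} + P x (⋃ t, D t) := measure_union_le _ _
        _ = ∑' t : ℕ, P x (D t) := by rw [hnull, zero_add, hUnion]
    · rw [← hUnion]
      exact measure_mono (Set.iUnion_subset hDA)
  -- ### RHS = ∑ P x (D t)
  have hfun : ∀ ω : ℕ → X,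
      (∑' t : ℕ, if (t : ℕ∞) < hit (U ∪ E) ω then ∑' z : U, p (ω t) (z : X) else 0)
        = ∑' t : ℕ, (G t).indicator (fun ω' => κ (ω' t)) ω := by
    intro ω
    apply tsum_congr
    intro t
    by_cases hωG : ω ∈ G t
    · rw [Set.indicator_of_mem hωG, if_pos]
      exact (hit_gt_iff (U ∪ E) ω t).mpr hωG
    · rw [Set.indicator_of_notMem hωG, if_neg]
      intro hlt
      exact hωG ((hit_gt_iff (U ∪ E) ω t).mp hlt)
  have hRHS : ∫⁻ ω, ∑' t : ℕ,
      (if (t : ℕ∞) < hit (U ∪ E) ω then ∑' z : U, p (ω t) (z : X) else 0) ∂ P x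
        = ∑' t : ℕ, P x (D t) := by
    rw [lintegral_congr hfun]
    rw [lintegral_tsum fun t =>
        ((show Measurable (fun ω : ℕ → X => κ (ω t)) from
          (hmfun κ).comp (hmeval t)).indicator (hmG t)).aemeasurable]
    exact tsum_congr key
  rw [hLHS, hRHS]
end
end

section
/- In a finite MDP with policy π, if for some p ∈ [0,1] every proxy state x' ∈ U' satisfies S_π(x') ≤ p, then every state x ∈ H satisfies S_π(x) ≤ p; i.e., p-safety of all proxy states implies p-safety of the entire MDP. -/
open MeasureTheory Set Filter
open scoped ENNReal

noncomputable section

set_option linter.unusedSectionVars false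

/- ### Auxiliary material -/

section hitLemmas

variable {X : Type*}

lemma hit_le' {A : Set X} {ω : ℕ → X} {n : ℕ} (h : ω n ∈ A) :
    hit A ω ≤ n :=
  sInf_le ⟨n, h, rfl⟩

lemma lt_hit' {A : Set X} {ω : ℕ → X} {k : ℕ} (h : ∀ j ≤ k, ω j ∉ A) :
    (k : ℕ∞) < hit A ω := by
  have h1 : ((k : ℕ∞) + 1) ≤ hit A ω := by
    refine le_sInf ?_
    rintro b ⟨m, hm, rfl⟩
    have hkm : k < m := by
      by_contra hc
      exact h m (le_of_not_gt hc) hm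
    show ((k:ℕ∞) + 1 ≤ (m:ℕ∞))
    rw [show ((k:ℕ∞) + 1) = ((k+1 : ℕ) : ℕ∞) by push_cast; ring]
    exact_mod_cast hkm
  calc (k:ℕ∞) < (k:ℕ∞) + 1 := by
        rw [show ((k:ℕ∞) + 1) = ((k+1 : ℕ) : ℕ∞) by push_cast; ring]
        exact_mod_cast Nat.lt_succ_self k
  _ ≤ hit A ω := h1

open Classical in
lemma hit_lt_hit_iff' {A B : Set X} {ω : ℕ → X} :
    hit A ω < hit B ω ↔ ∃ k, ω k ∈ A ∧ ∀ j ≤ k, ω j ∉ B := by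
  constructor
  · intro h
    have hne : ∃ m, ω m ∈ A := by
      by_contra hc
      push_neg at hc
      have hemp : {n | ω n ∈ A} = ∅ := eq_empty_iff_forall_notMem.2 hc
      have : hit A ω = ⊤ := by rw [hit, hemp]; simp
      rw [this] at h
      exact (not_top_lt h)
    refine ⟨Nat.find hne, Nat.find_spec hne, ?_⟩
    intro j hj hB
    have h1 : hit B ω ≤ j := hit_le' hB
    have h2 : (Nat.find hne : ℕ∞) ≤ hit A ω := by
      refine le_sInf ?_
      rintro b ⟨m, hm, rfl⟩
      show ((Nat.find hne : ℕ∞) ≤ (m:ℕ∞))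
      exact_mod_cast Nat.find_min' hne hm
    have : hit B ω ≤ hit A ω :=
      le_trans h1 (le_trans (by exact_mod_cast hj) h2)
    exact absurd h (not_lt_of_ge this)
  · rintro ⟨k, hA, hB⟩
    exact lt_of_le_of_lt (hit_le' hA) (lt_hit' hB)

end hitLemmas

section measurabilityForcing

/-- Measurable sets of a countable product cannot distinguish coordinatewise
measurably-indistinguishable paths. -/
lemma pi_invariant' {X : Type*} [MeasurableSpace X] {B : Set (ℕ → X)}
    (hB : MeasurableSet B) (ω ω' : ℕ → X)
    (hr : ∀ i (S : Set X), MeasurableSet S → (ω i ∈ S ↔ ω' i ∈ S)) :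
    ω ∈ B ↔ ω' ∈ B := by
  let m' : MeasurableSpace (ℕ → X) :=
    { MeasurableSet' := fun C => ∀ ψ ψ' : ℕ → X,
        (∀ i (S : Set X), MeasurableSet S → (ψ i ∈ S ↔ ψ' i ∈ S)) → (ψ ∈ C ↔ ψ' ∈ C)
      measurableSet_empty := fun ψ ψ' _ => Iff.rfl
      measurableSet_compl := fun C hC ψ ψ' h => not_congr (hC ψ ψ' h)
      measurableSet_iUnion := fun f hf ψ ψ' h => by
        simp only [mem_iUnion]; exact exists_congr fun i => hf i ψ ψ' h }
  have hle : (MeasurableSpace.pi : MeasurableSpace (ℕ → X)) ≤ m' := by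
    refine iSup_le fun i => ?_
    intro C hC
    obtain ⟨S, hS, rfl⟩ := hC
    exact fun ψ ψ' h => h i S hS
  exact hle B hB ω ω' hr

/-- The Markov-chain initial-distribution condition forces every subset of the
(finite) state space to be measurable. -/
lemma allMeas' {X : Type*} [Fintype X] [DecidableEq X] [MeasurableSpace X]
    (P : X → Measure (ℕ → X))
    (h0 : ∀ x y : X, P x {ω | ω 0 = y} = if y = x then 1 else 0) :
    ∀ s : Set X, MeasurableSet s := by
  have hsep : ∀ x y : X, x ≠ y → ∃ S : Set X, MeasurableSet S ∧ y ∈ S ∧ x ∉ S := by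
    intro x y hxy
    by_contra hcon
    push_neg at hcon
    have hsym : ∀ S : Set X, MeasurableSet S → (y ∈ S ↔ x ∈ S) := by
      intro S hS
      constructor
      · intro h; exact hcon S hS h
      · intro h
        by_contra hy
        exact (hcon Sᶜ hS.compl hy) h
    have hy0 : P x {ω | ω 0 = y} = 0 := by
      rw [h0 x y, if_neg (fun h => hxy h.symm)]
    obtain ⟨B, hsub, hBm, hB0⟩ := exists_measurable_superset_of_null hy0
    have hxB : {ω : ℕ → X | ω 0 = x} ⊆ B := by
      intro ψ hψ
      have hφ : Function.update ψ 0 y ∈ B := hsub (by simp)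
      have := pi_invariant' hBm (Function.update ψ 0 y) ψ (fun i S hS => by
        rcases eq_or_ne i 0 with rfl | hi
        · have hψ0 : ψ 0 = x := hψ
          simp only [Function.update_self, hψ0]
          exact hsym S hS
        · simp [Function.update_of_ne hi])
      exact this.mp hφ
    have h1 : (1 : ℝ≥0∞) ≤ P x B := by
      calc (1:ℝ≥0∞) = P x {ω | ω 0 = x} := by rw [h0 x x, if_pos rfl]
      _ ≤ P x B := measure_mono hxB
    rw [hB0] at h1
    simp at h1
  have hsing : ∀ y : X, MeasurableSet ({y} : Set X) := by
    intro y
    have : ({y} : Set X) = ⋂ (x : X), ⋂ (h : x ≠ y), (hsep x y h).choose := by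
      ext z
      simp only [mem_iInter, mem_singleton_iff]
      constructor
      · intro hz x h
        subst hz
        exact (hsep x z h).choose_spec.2.1
      · intro hz
        by_contra hne
        exact (hsep z y hne).choose_spec.2.2 (hz z hne)
    rw [this]
    exact MeasurableSet.iInter fun x => MeasurableSet.iInter fun h => (hsep x y h).choose_spec.1
  intro s
  have : s = ⋃ y ∈ s, ({y} : Set X) := by simp
  rw [this]
  exact MeasurableSet.biUnion s.to_countable fun y _ => hsing y

end measurabilityForcing

section chainCombinatorics

variable {X : Type*} [Fintype X] [DecidableEq X] [MeasurableSpace X]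

def shf (ω : ℕ → X) : ℕ → X := fun n => ω (n+1)

def cyl (n : ℕ) (t : ℕ → X) : Set (ℕ → X) := {ω | ∀ i ≤ n, ω i = t i}

def exte (n : ℕ) (s : Fin (n+1) → X) : ℕ → X :=
  fun i => if h : i ≤ n then s ⟨i, Nat.lt_succ_of_le h⟩ else s ⟨n, Nat.lt_succ_self n⟩

lemma exte_le {n : ℕ} {s : Fin (n+1) → X} {i : ℕ} (h : i ≤ n) :
    exte n s i = s ⟨i, Nat.lt_succ_of_le h⟩ := dif_pos h

def cons1 (y : X) (t : ℕ → X) : ℕ → X := fun i => match i with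
  | 0 => y
  | Nat.succ j => t j

def wgt (pker : X → X → ℝ≥0∞) (n : ℕ) (t : ℕ → X) : ℝ≥0∞ :=
  ∏ i ∈ Finset.range n, pker (t i) (t (i+1))

variable (P : X → Measure (ℕ → X)) (pker : X → X → ℝ≥0∞)

lemma wgt_cons (n : ℕ) (y : X) (t : ℕ → X) :
    wgt pker (n+1) (cons1 y t) = wgt pker n t * pker y (t 0) := by
  rw [wgt, Finset.prod_range_succ']
  rfl

lemma cylMeas
    (h0 : ∀ x y, P x {ω | ω 0 = y} = if y = x then 1 else 0)
    (hstep : ∀ x (n : ℕ) (s : ℕ → X),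
      P x {ω | ∀ i ≤ n + 1, ω i = s i}
        = P x {ω | ∀ i ≤ n, ω i = s i} * pker (s n) (s (n + 1)))
    (x : X) (n : ℕ) (t : ℕ → X) :
    P x (cyl n t) = (if t 0 = x then 1 else 0) * wgt pker n t := by
  induction n with
  | zero =>
      have : cyl 0 t = {ω | ω 0 = t 0} := by
        ext ω
        constructor
        · exact fun h => h 0 le_rfl
        · intro h i hi
          interval_cases i
          exact h
      rw [this, h0 x (t 0)]
      simp [wgt]
  | succ n ih =>
      have h1 : P x (cyl (n+1) t) = P x (cyl n t) * pker (t n) (t (n+1)) :=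
        hstep x n t
      rw [h1, ih]
      simp only [wgt, Finset.prod_range_succ, mul_assoc]

lemma mCoord (hAll : ∀ s : Set X, MeasurableSet s) (k : ℕ) (V : Set X) :
    MeasurableSet {ω : ℕ → X | ω k ∈ V} :=
  measurable_pi_apply k (hAll V)

lemma mCyl (hAll : ∀ s : Set X, MeasurableSet s) (n : ℕ) (t : ℕ → X) :
    MeasurableSet (cyl n t) := by
  have : cyl n t = ⋂ i, ⋂ (_ : i ≤ n), {ω : ℕ → X | ω i ∈ ({t i} : Set X)} := by
    ext ω; simp [cyl]
  rw [this]
  exact MeasurableSet.iInter fun i => MeasurableSet.iInter fun _ => mCoord hAll i _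

open Classical in
lemma detMeas (hAll : ∀ s : Set X, MeasurableSet s) (n : ℕ) (S : Set (ℕ → X))
    (hdet : ∀ ω ω' : ℕ → X, (∀ i ≤ n, ω i = ω' i) → ω ∈ S → ω' ∈ S)
    (h0 : ∀ x y, P x {ω | ω 0 = y} = if y = x then 1 else 0)
    (hstep : ∀ x (n : ℕ) (s : ℕ → X),
      P x {ω | ∀ i ≤ n + 1, ω i = s i}
        = P x {ω | ∀ i ≤ n, ω i = s i} * pker (s n) (s (n + 1)))
    (y : X) :
    P y S = ∑ s : Fin (n+1) → X,
      if exte n s ∈ S then (if exte n s 0 = y then 1 else 0) * wgt pker n (exte n s)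
      else 0 := by
  have hS : S = ⋃ s : Fin (n+1) → X,
      (if exte n s ∈ S then cyl n (exte n s) else ∅) := by
    ext ω
    simp only [mem_iUnion]
    constructor
    · intro hω
      refine ⟨fun i => ω i, ?_⟩
      have hagree : ∀ i ≤ n, ω i = exte n (fun i : Fin (n+1) => ω i) i := by
        intro i hi
        rw [exte_le hi]
      have hmem : exte n (fun i : Fin (n+1) => ω i) ∈ S := hdet _ _ hagree hω
      rw [if_pos hmem]
      intro i hi
      exact hagree i hi
    · rintro ⟨s, hs⟩
      by_cases hmem : exte n s ∈ S
      · rw [if_pos hmem] at hs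
        exact hdet _ _ (fun i hi => (hs i hi).symm) hmem
      · rw [if_neg hmem] at hs
        exact absurd hs (notMem_empty ω)
  have hdisj : Pairwise (Function.onFun Disjoint
      (fun s : Fin (n+1) → X => if exte n s ∈ S then cyl n (exte n s) else ∅)) := by
    intro s s' hne
    simp only [Function.onFun]
    by_cases h1 : exte n s ∈ S
    · by_cases h2 : exte n s' ∈ S
      · rw [if_pos h1, if_pos h2, Set.disjoint_left]
        intro ω hω hω'
        apply hne
        funext i
        have hi : (i : ℕ) ≤ n := Nat.le_of_lt_succ i.2
        have h3 := hω i hi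
        have h4 := hω' i hi
        rw [exte_le hi] at h3 h4
        exact h3.symm.trans h4
      · rw [if_neg h2]; exact disjoint_empty _
    · rw [if_neg h1]; exact empty_disjoint _
  have hmeas : ∀ s : Fin (n+1) → X,
      MeasurableSet (if exte n s ∈ S then cyl n (exte n s) else ∅) := by
    intro s
    by_cases h1 : exte n s ∈ S
    · rw [if_pos h1]; exact mCyl hAll n _
    · rw [if_neg h1]; exact MeasurableSet.empty
  have hsum := measure_iUnion (μ := P y) hdisj hmeas
  rw [← hS] at hsum
  rw [hsum, tsum_fintype]
  refine Finset.sum_congr rfl fun s _ => ?_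
  by_cases h1 : exte n s ∈ S
  · rw [if_pos h1, if_pos h1, cylMeas P pker h0 hstep]
  · rw [if_neg h1, if_neg h1, measure_empty]

open Classical in
lemma shiftMeas (hAll : ∀ s : Set X, MeasurableSet s) (n : ℕ) (S : Set (ℕ → X))
    (hdet : ∀ ω ω' : ℕ → X, (∀ i ≤ n, ω i = ω' i) → ω ∈ S → ω' ∈ S)
    (h0 : ∀ x y, P x {ω | ω 0 = y} = if y = x then 1 else 0)
    (hstep : ∀ x (n : ℕ) (s : ℕ → X),
      P x {ω | ∀ i ≤ n + 1, ω i = s i}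
        = P x {ω | ∀ i ≤ n, ω i = s i} * pker (s n) (s (n + 1)))
    (x : X) :
    P x (shf ⁻¹' S) = ∑ s : Fin (n+1) → X,
      if exte n s ∈ S then pker x (exte n s 0) * wgt pker n (exte n s) else 0 := by
  set f : X × (Fin (n+1) → X) → Set (ℕ → X) :=
    fun q => if exte n q.2 ∈ S then cyl (n+1) (cons1 q.1 (exte n q.2)) else ∅ with hf
  have hT : shf ⁻¹' S = ⋃ q : X × (Fin (n+1) → X), f q := by
    ext ω
    simp only [mem_iUnion, mem_preimage]
    constructor
    · intro hω
      refine ⟨⟨ω 0, fun i => ω (i+1)⟩, ?_⟩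
      have hagree : ∀ i ≤ n, shf ω i = exte n (fun i : Fin (n+1) => ω (i+1)) i := by
        intro i hi; rw [exte_le hi]; rfl
      have hmem : exte n (fun i : Fin (n+1) => ω (i+1)) ∈ S := hdet _ _ hagree hω
      rw [hf]; simp only; rw [if_pos hmem]
      intro i hi
      match i with
      | 0 => rfl
      | (j+1) =>
        have hj : j ≤ n := by omega
        show ω (j+1) = exte n (fun i : Fin (n+1) => ω (↑i+1)) j
        rw [exte_le hj]
    · rintro ⟨⟨y0, s⟩, hq⟩
      rw [hf] at hq; simp only at hq
      by_cases hmem : exte n s ∈ S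
      · rw [if_pos hmem] at hq
        refine hdet _ _ (fun i hi => ?_) hmem
        exact (hq (i+1) (by omega)).symm
      · rw [if_neg hmem] at hq
        exact absurd hq (notMem_empty ω)
  have hdisj : Pairwise (Function.onFun Disjoint f) := by
    intro q q' hne
    simp only [Function.onFun, hf]
    by_cases h1 : exte n q.2 ∈ S
    · by_cases h2 : exte n q'.2 ∈ S
      · rw [if_pos h1, if_pos h2, Set.disjoint_left]
        intro ω hω hω'
        apply hne
        have e0 : q.1 = q'.1 := by
          have a1 := hω 0 (by omega)
          have a2 := hω' 0 (by omega)
          exact a1.symm.trans a2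
        have e2 : q.2 = q'.2 := by
          funext i
          have hi : (i : ℕ) ≤ n := Nat.le_of_lt_succ i.2
          have a1 := hω (i+1) (by omega)
          have a2 := hω' (i+1) (by omega)
          have b1 : cons1 q.1 (exte n q.2) (↑i+1) = exte n q.2 i := by
            show exte n q.2 ↑i = exte n q.2 i
            rw [exte_le hi]
          have b2 : cons1 q'.1 (exte n q'.2) (↑i+1) = exte n q'.2 i := by
            show exte n q'.2 ↑i = exte n q'.2 i
            rw [exte_le hi]
          rw [b1] at a1
          rw [b2] at a2
          rw [exte_le hi] at a1 a2
          exact a1.symm.trans a2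
        exact Prod.ext e0 e2
      · rw [if_neg h2]; exact disjoint_empty _
    · rw [if_neg h1]; exact empty_disjoint _
  have hmeas : ∀ q, MeasurableSet (f q) := by
    intro q
    rw [hf]; simp only
    by_cases h1 : exte n q.2 ∈ S
    · rw [if_pos h1]; exact mCyl hAll (n+1) _
    · rw [if_neg h1]; exact MeasurableSet.empty
  have hsum := measure_iUnion (μ := P x) hdisj hmeas
  rw [← hT] at hsum
  rw [hsum, tsum_fintype, Fintype.sum_prod_type]
  have key : ∀ y, (∑ s : Fin (n+1) → X, P x (f (y, s)))
      = if y = x then (∑ s : Fin (n+1) → X,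
          if exte n s ∈ S then pker x (exte n s 0) * wgt pker n (exte n s) else 0) else 0 := by
    intro y
    by_cases hyx : y = x
    · subst hyx
      rw [if_pos rfl]
      refine Finset.sum_congr rfl fun s _ => ?_
      by_cases hc : exte n s ∈ S
      · rw [hf]; simp only; rw [if_pos hc, if_pos hc,
          cylMeas P pker h0 hstep, wgt_cons]
        have hc0 : cons1 y (exte n s) 0 = y := rfl
        rw [hc0, if_pos rfl, one_mul]
        rw [mul_comm]
      · rw [hf]; simp only; rw [if_neg hc, if_neg hc, measure_empty]
    · rw [if_neg hyx]
      refine Finset.sum_eq_zero fun s _ => ?_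
      by_cases hc : exte n s ∈ S
      · rw [hf]; simp only; rw [if_pos hc, cylMeas P pker h0 hstep]
        have hc0 : cons1 y (exte n s) 0 = y := rfl
        rw [hc0, if_neg hyx, zero_mul]
      · rw [hf]; simp only; rw [if_neg hc, measure_empty]
  rw [Finset.sum_congr rfl fun y _ => key y, Finset.sum_ite_eq' Finset.univ x _,
    if_pos (Finset.mem_univ x)]

open Classical in
lemma markov_eq (hAll : ∀ s : Set X, MeasurableSet s) (n : ℕ) (S : Set (ℕ → X))
    (hdet : ∀ ω ω' : ℕ → X, (∀ i ≤ n, ω i = ω' i) → ω ∈ S → ω' ∈ S)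
    (h0 : ∀ x y, P x {ω | ω 0 = y} = if y = x then 1 else 0)
    (hstep : ∀ x (n : ℕ) (s : ℕ → X),
      P x {ω | ∀ i ≤ n + 1, ω i = s i}
        = P x {ω | ∀ i ≤ n, ω i = s i} * pker (s n) (s (n + 1)))
    (x : X) :
    P x (shf ⁻¹' S) = ∑ y, pker x y * P y S := by
  rw [shiftMeas P pker hAll n S hdet h0 hstep x]
  have key : ∀ y, pker x y * P y S = ∑ s : Fin (n+1) → X,
      (if exte n s ∈ S then
        (if exte n s 0 = y then pker x y * wgt pker n (exte n s) else 0) else 0) := by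
    intro y
    rw [detMeas P pker hAll n S hdet h0 hstep y, Finset.mul_sum]
    refine Finset.sum_congr rfl fun s _ => ?_
    by_cases hc : exte n s ∈ S
    · rw [if_pos hc, if_pos hc]
      by_cases he : exte n s 0 = y
      · rw [if_pos he, if_pos he, one_mul]
      · rw [if_neg he, if_neg he, zero_mul, mul_zero]
    · rw [if_neg hc, if_neg hc, mul_zero]
  rw [Finset.sum_congr rfl fun y _ => key y, Finset.sum_comm]
  refine Finset.sum_congr rfl fun s _ => ?_
  by_cases hc : exte n s ∈ S
  · simp only [if_pos hc]
    rw [Finset.sum_ite_eq Finset.univ (exte n s 0)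
      (fun y => pker x y * wgt pker n (exte n s)), if_pos (Finset.mem_univ _)]
  · simp only [if_neg hc, Finset.sum_const_zero]

end chainCombinatorics

/-- if every proxy state `x' ∈ U'` is `p`-safe (`S_π(x') ≤ p`), then
every state `x ∈ H` is `p`-safe, i.e. `p`-safety of the proxy set implies `p`-safety
of the whole MDP (chain induced by the stationary policy). -/
theorem stmt10 {X : Type*} [Fintype X] [DecidableEq X] [MeasurableSpace X]
    (P : X → Measure (ℕ → X)) (pker : X → X → ℝ≥0∞)
    (H U E U' : Set X)
    (hpart : (univ : Set X) = H ∪ U ∪ E)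
    (hHU : Disjoint H U) (hHE : Disjoint H E) (hUE : Disjoint U E)
    (hU' : U' ⊆ H)
    (hmc : IsMarkovChain P pker)
    (hproxy : ∀ x ∈ H, P x {ω | hit U' ω < hit U ω} = 1)
    (p : ℝ≥0∞) (hp : p ≤ 1)
    (hUsafe : ∀ x' ∈ U', P x' {ω | hit U ω < hit E ω} ≤ p) :
    ∀ x ∈ H, P x {ω | hit U ω < hit E ω} ≤ p := by
  obtain ⟨hprob, h0, hstep⟩ := hmc
  have hAll : ∀ s : Set X, MeasurableSet s := allMeas' P h0
  -- the approximating events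
  set Anset : ℕ → Set (ℕ → X) :=
    fun n => {ω | ∃ k ≤ n, ω k ∈ U ∧ ∀ j ≤ k, ω j ∉ E} with hAnset
  have hdetA : ∀ n, ∀ ω ω' : ℕ → X, (∀ i ≤ n, ω i = ω' i) → ω ∈ Anset n → ω' ∈ Anset n := by
    rintro n ω ω' hag ⟨k, hk, hU2, hE2⟩
    refine ⟨k, hk, ?_, fun j hj => ?_⟩
    · rw [← hag k hk]; exact hU2
    · rw [← hag j (le_trans hj hk)]; exact hE2 j hj
  have hsubhit : ∀ n, Anset n ⊆ {ω | hit U ω < hit E ω} := by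
    rintro n ω ⟨k, _, hU2, hE2⟩
    exact hit_lt_hit_iff'.2 ⟨k, hU2, hE2⟩
  have hunion : {ω : ℕ → X | hit U ω < hit E ω} = ⋃ n, Anset n := by
    ext ω
    simp only [mem_iUnion, mem_setOf_eq]
    constructor
    · intro h
      obtain ⟨k, h1, h2⟩ := hit_lt_hit_iff'.1 h
      exact ⟨k, k, le_rfl, h1, h2⟩
    · rintro ⟨n, k, _, h1, h2⟩
      exact hit_lt_hit_iff'.2 ⟨k, h1, h2⟩
  -- basic null sets
  have null0 : ∀ x : X, P x {ω | ¬ ω 0 = x} = 0 := by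
    intro x
    haveI := hprob x
    have hx1 : P x {ω | ω 0 = x} = 1 := by rw [h0, if_pos rfl]
    have hmx : MeasurableSet {ω : ℕ → X | ω 0 = x} := by
      have := mCoord hAll 0 ({x} : Set X)
      simpa using this
    have hcompl : {ω : ℕ → X | ¬ ω 0 = x} = {ω : ℕ → X | ω 0 = x}ᶜ := rfl
    rw [hcompl, measure_compl hmx (measure_ne_top _ _), hx1, measure_univ, tsub_self]
  -- one-step cylinder probability
  have hcyl2 : ∀ x y : X, P x (cyl 1 (cons1 x (fun _ => y))) = pker x y := by
    intro x y
    rw [cylMeas P pker h0 hstep]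
    have hc0 : cons1 x (fun _ => y) 0 = x := rfl
    rw [hc0, if_pos rfl, one_mul, wgt, Finset.prod_range_one]
    rfl
  -- row sums of the kernel are one
  have rowsum : ∀ x : X, (∑ y : X, pker x y) = 1 := by
    intro x
    haveI := hprob x
    have hone : ∀ y, P x {ω : ℕ → X | ω 1 = y} = pker x y := by
      intro y
      refine le_antisymm ?_ ?_
      · have hsub : {ω : ℕ → X | ω 1 = y} ⊆
            cyl 1 (cons1 x (fun _ => y)) ∪ {ω | ¬ ω 0 = x} := by
          intro ω hω
          by_cases hx : ω 0 = x
          · left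
            intro i hi
            interval_cases i
            · exact hx
            · exact hω
          · right; exact hx
        calc P x {ω : ℕ → X | ω 1 = y}
            ≤ P x (cyl 1 (cons1 x (fun _ => y)) ∪ {ω | ¬ ω 0 = x}) := measure_mono hsub
          _ ≤ P x (cyl 1 (cons1 x (fun _ => y))) + P x {ω | ¬ ω 0 = x} :=
              measure_union_le _ _
          _ = pker x y := by rw [hcyl2, null0, add_zero]
      · rw [← hcyl2 x y]
        refine measure_mono ?_
        intro ω hω
        exact hω 1 le_rfl
    have hdis : Pairwise (Function.onFun Disjoint (fun y : X => {ω : ℕ → X | ω 1 = y})) := by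
      intro y y' hne
      simp only [Function.onFun]
      rw [Set.disjoint_left]
      intro ω h1 h2
      exact hne ((h1 : ω 1 = y).symm.trans h2)
    have hmeas : ∀ y : X, MeasurableSet {ω : ℕ → X | ω 1 = y} := by
      intro y
      have := mCoord hAll 1 ({y} : Set X)
      simpa using this
    have hcover : (univ : Set (ℕ → X)) = ⋃ y : X, {ω | ω 1 = y} := by
      ext ω; simp
    calc (∑ y : X, pker x y) = ∑ y : X, P x {ω : ℕ → X | ω 1 = y} := by
          refine Finset.sum_congr rfl fun y _ => (hone y).symm
      _ = P x (⋃ y : X, {ω | ω 1 = y}) := by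
          rw [measure_iUnion hdis hmeas, tsum_fintype]
      _ = 1 := by rw [← hcover, measure_univ]
  -- measurability of hitting-comparison events
  have mhit : ∀ A B : Set X, MeasurableSet {ω : ℕ → X | hit A ω < hit B ω} := by
    intro A B
    have : {ω : ℕ → X | hit A ω < hit B ω}
        = ⋃ k, ({ω : ℕ → X | ω k ∈ A} ∩ ⋂ j, ⋂ (_ : j ≤ k), {ω : ℕ → X | ω j ∈ Bᶜ}) := by
      ext ω
      simp only [mem_iUnion, mem_inter_iff, mem_iInter, mem_setOf_eq, mem_compl_iff]
      exact hit_lt_hit_iff'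
    rw [this]
    exact MeasurableSet.iUnion fun k => (mCoord hAll k A).inter
      (MeasurableSet.iInter fun j => MeasurableSet.iInter fun _ => mCoord hAll j Bᶜ)
  -- the proxy hypothesis kills direct jumps from `H \ U'` to `U`
  have kerzero : ∀ x, x ∈ H → x ∉ U' → ∀ y ∈ U, pker x y = 0 := by
    intro x hx hxu y hy
    haveI := hprob x
    have h1 : P x {ω | hit U' ω < hit U ω} = 1 := hproxy x hx
    have hcompl : P x ({ω : ℕ → X | hit U' ω < hit U ω}ᶜ) = 0 := by
      rw [measure_compl (mhit U' U) (measure_ne_top _ _), h1, measure_univ, tsub_self]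
    have hsub : cyl 1 (cons1 x (fun _ => y)) ⊆ {ω : ℕ → X | hit U' ω < hit U ω}ᶜ := by
      intro ω hω
      simp only [mem_compl_iff, mem_setOf_eq]
      intro hlt
      obtain ⟨k, hkU', hkU⟩ := hit_lt_hit_iff'.1 hlt
      have hω0 : ω 0 = x := hω 0 (by omega)
      have hω1 : ω 1 = y := hω 1 le_rfl
      match k with
      | 0 =>
          rw [hω0] at hkU'
          exact hxu hkU'
      | (j+1) =>
          have := hkU 1 (by omega)
          rw [hω1] at this
          exact this hy
    refine le_antisymm ?_ zero_le
    calc pker x y = P x (cyl 1 (cons1 x (fun _ => y))) := (hcyl2 x y).symm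
      _ ≤ P x ({ω : ℕ → X | hit U' ω < hit U ω}ᶜ) := measure_mono hsub
      _ = 0 := hcompl
  -- from a state of `E` the approximating events are null
  have zeroE : ∀ y ∈ E, ∀ n, P y (Anset n) = 0 := by
    intro y hy n
    refine measure_mono_null ?_ (null0 y)
    rintro ω ⟨k, _, _, hE2⟩
    have h1 : ω 0 ∉ E := hE2 0 (Nat.zero_le k)
    intro h2
    rw [h2] at h1
    exact h1 hy
  -- main induction
  have main : ∀ n, ∀ x ∈ H, P x (Anset n) ≤ p := by
    intro n
    induction n with
    | zero =>
        intro x hx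
        have hxU : x ∉ U := Set.disjoint_left.1 hHU hx
        have hz : P x (Anset 0) = 0 := by
          refine measure_mono_null ?_ (null0 x)
          rintro ω ⟨k, hk0, hU2, _⟩
          interval_cases k
          intro h2
          rw [h2] at hU2
          exact hxU hU2
        rw [hz]
        exact zero_le
    | succ n ih =>
        intro x hx
        by_cases hxu : x ∈ U'
        · exact le_trans (measure_mono (hsubhit (n+1))) (hUsafe x hxu)
        · have hxU : x ∉ U := Set.disjoint_left.1 hHU hx
          have hshiftsub : Anset (n+1) ⊆ shf ⁻¹' (Anset n) ∪ {ω | ¬ ω 0 = x} := by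
            intro ω hω
            by_cases hx0 : ω 0 = x
            · left
              obtain ⟨k, hk, hU2, hE2⟩ := hω
              match k with
              | 0 =>
                  rw [hx0] at hU2
                  exact absurd hU2 hxU
              | (j+1) =>
                  exact ⟨j, by omega, hU2, fun i hi => hE2 (i+1) (by omega)⟩
            · right; exact hx0
          calc P x (Anset (n+1))
              ≤ P x (shf ⁻¹' (Anset n) ∪ {ω | ¬ ω 0 = x}) := measure_mono hshiftsub
            _ ≤ P x (shf ⁻¹' (Anset n)) + P x {ω | ¬ ω 0 = x} := measure_union_le _ _
            _ = P x (shf ⁻¹' (Anset n)) := by rw [null0, add_zero]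
            _ = ∑ y : X, pker x y * P y (Anset n) :=
                markov_eq P pker hAll n (Anset n) (hdetA n) h0 hstep x
            _ ≤ ∑ y : X, pker x y * p := by
                refine Finset.sum_le_sum fun y _ => ?_
                have hy : y ∈ H ∪ U ∪ E := by
                  rw [← hpart]; trivial
                rcases hy with (hyH | hyU) | hyE
                · exact mul_le_mul_right (ih y hyH) _
                · rw [kerzero x hx hxu y hyU, zero_mul, zero_mul]
                · rw [zeroE y hyE n, mul_zero]
                  exact zero_le
            _ = (∑ y : X, pker x y) * p := by rw [← Finset.sum_mul]
            _ = p := by rw [rowsum x, one_mul]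
  -- pass to the limit
  intro x hx
  have hmono : Monotone Anset := by
    intro m n hmn ω hω
    obtain ⟨k, hk, h1, h2⟩ := hω
    exact ⟨k, le_trans hk hmn, h1, h2⟩
  rw [hunion, Directed.measure_iUnion hmono.directed_le]
  exact iSup_le fun n => main n x hx
end
end
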